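/- Theorem 4 (error control for complementary pairs stability selection). Let (Ω, 𝓕, μ) be a probability space, B a positive integer, L a finite index set, and for each k ∈ L and b ∈ {1, …, 2B} let E_{k,b} ∈ 𝓕 be an event (the selection of feature k on subsample b). Define the selection rate r̂_k := (1/(2B)) Σ_{b=1}^{2B} 1[E_{k,b}] and the simultaneous selection rate s_k := (1/B) Σ_{b=1}^{B} 1[E_{k,2b−1} ∩ E_{k,2b}]. Let 0 ≤ θ < τ ≤ 1 and suppose that for every k ∈ L: the law of r̂_k, a probability mass function supported on {0, 1/(2B), 2/(2B), …, 1}, is −1/4-concave with E[r̂_k] ≤ θ; and the law of s_k, a probability mass function supported on {0, 1/B, 2/B, …, 1}, is −1/2-concave with E[s_k] ≤ θ². Then E[ |{k ∈ L : r̂_k ≥ τ}| ] ≤ D(θ, τ, 2B, −1/4) · |L|; and if moreover θ² < 2τ − 1, then also E[ |{k ∈ L : r̂_k ≥ τ}| ] ≤ D(θ², 2τ − 1, B, −1/2) · |L|, so that the expected number of selected low-rate features is at most min{ D(θ², 2τ − 1, B, −1/2), D(θ, τ, 2B, −1/4) } · |L|. -/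

import Mathlib

open MeasureTheory

/-- The `r`-th generalized mean `M_r(a, b; λ)` of `a, b ≥ 0` (for `r < 0`), with the
convention that it is `0` when `a b = 0`. -/
noncomputable def genMean (r a b lam : ℝ) : ℝ :=
  if a = 0 ∨ b = 0 then 0 else ((1 - lam) * a ^ r + lam * b ^ r) ^ (1 / r)

/-- A nonnegative function `f` on an interval `I ⊆ ℝ` is `r`-concave if
`f((1−λ)x + λy) ≥ M_r(f(x), f(y); λ)` for all `x, y ∈ I` and `λ ∈ (0, 1)`. -/
def RConcaveOn (r : ℝ) (I : Set ℝ) (f : ℝ → ℝ) : Prop :=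
  ∀ x ∈ I, ∀ y ∈ I, ∀ lam ∈ Set.Ioo (0 : ℝ) 1,
    genMean r (f x) (f y) lam ≤ f ((1 - lam) * x + lam * y)

/-- The piecewise-linear interpolant of the points `(i/N, f i)`, `i = 0, …, N`,
evaluated at `x ∈ [0, 1]`. -/
noncomputable def interp (N : ℕ) (f : ℕ → ℝ) (x : ℝ) : ℝ :=
  f ⌊x * N⌋₊ + (x * N - ⌊x * N⌋₊) * (f (⌊x * N⌋₊ + 1) - f ⌊x * N⌋₊)

/-- `f` is an `r`-concave probability mass function supported on the grid
`{0, 1/N, 2/N, …, 1}` (identifying `f i` with the mass at `i/N`): it is nonnegative,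
vanishes beyond the grid, sums to one, and its piecewise-linear interpolant is
`r`-concave on `[0, 1]`. -/
def IsRConcavePMF (N : ℕ) (r : ℝ) (f : ℕ → ℝ) : Prop :=
  (∀ i, 0 ≤ f i) ∧ (∀ i, N < i → f i = 0) ∧
  (∑ i ∈ Finset.range (N + 1), f i = 1) ∧
  RConcaveOn r (Set.Icc 0 1) (interp N f)

/-- `Dmax θ τ N r` : the supremum of `P(X ≥ τ)` over all random variables `X` supported
on `{0, 1/N, …, 1}` whose probability mass function is `r`-concave and whose mean is at
most `θ`. -/
noncomputable def Dmax (θ τ : ℝ) (N : ℕ) (r : ℝ) : ℝ :=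
  sSup {p : ℝ | ∃ f : ℕ → ℝ, IsRConcavePMF N r f ∧
    (∑ i ∈ Finset.range (N + 1), ((i : ℝ) / N) * f i) ≤ θ ∧
    p = ∑ i ∈ Finset.range (N + 1), if τ ≤ (i : ℝ) / N then f i else 0}


section Helpers

variable {Ω : Type*} [MeasurableSpace Ω]

lemma pairSum (h : ℕ → ℝ) (B : ℕ) : ∑ b ∈ Finset.Icc 1 (2*B), h b
    = ∑ b ∈ Finset.Icc 1 B, (h (2*b-1) + h (2*b)) := by
  induction B with
  | zero => simp
  | succ B ih =>
    have h1 : 2*(B+1)-1 = 2*B+1 := by omega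
    have h2 : 2 * (B+1) = (2*B+1) + 1 := by omega
    rw [Finset.sum_Icc_succ_top (by omega : 1 ≤ B+1), h1, h2,
      Finset.sum_Icc_succ_top (by omega), Finset.sum_Icc_succ_top (by omega), ih]
    ring

lemma indInter (A C : Set Ω) (ω : Ω) :
    A.indicator (fun _ => (1:ℝ)) ω + C.indicator (fun _ => (1:ℝ)) ω - 1
      ≤ (A ∩ C).indicator (fun _ => (1:ℝ)) ω := by
  by_cases hA : ω ∈ A <;> by_cases hC : ω ∈ C <;>
    simp [Set.indicator_apply, hA, hC]

lemma grid_prob (μ : Measure Ω) [IsProbabilityMeasure μ]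
    (X : Ω → ℝ) (hXm : Measurable X) (N : ℕ) (c : ℝ) (hc : 0 < c)
    (hval : ∀ ω, ∃ m ≤ N, X ω = (m : ℝ) / c) (τ : ℝ) :
    (μ {ω | τ ≤ X ω}).toReal =
      ∑ i ∈ Finset.range (N+1), if τ ≤ (i:ℝ)/c then (μ {ω | X ω = (i:ℝ)/c}).toReal else 0 := by
  classical
  have hset : {ω | τ ≤ X ω} =
      ⋃ i ∈ (Finset.range (N+1)).filter (fun i : ℕ => τ ≤ (i:ℝ)/c), {ω | X ω = (i:ℝ)/c} := by
    ext ω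
    simp only [Set.mem_setOf_eq, Set.mem_iUnion, Finset.mem_filter, Finset.mem_range]
    constructor
    · intro hτ
      obtain ⟨m, hm, hXm'⟩ := hval ω
      exact ⟨m, ⟨⟨by omega, by rw [← hXm']; exact hτ⟩, hXm'⟩⟩
    · rintro ⟨i, ⟨_, hτi⟩, hXi⟩
      rw [hXi]; exact hτi
  have hdisj : Set.PairwiseDisjoint
      (((Finset.range (N+1)).filter (fun i : ℕ => τ ≤ (i:ℝ)/c) : Finset ℕ) : Set ℕ)
      (fun i : ℕ => {ω | X ω = (i:ℝ)/c}) := by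
    intro i _ j _ hij
    apply Set.disjoint_left.mpr
    intro ω hi hj
    apply hij
    have h : (i:ℝ)/c = (j:ℝ)/c := by rw [← hi, ← hj]
    field_simp at h
    exact_mod_cast h
  rw [hset, measure_biUnion_finset hdisj
      (fun i _ => hXm (measurableSet_singleton ((i:ℝ)/c))),
    ENNReal.toReal_sum (fun i _ => measure_ne_top μ _), Finset.sum_filter]

lemma le_Dmax {θ τ : ℝ} {N : ℕ} {r : ℝ} {f : ℕ → ℝ} (hf : IsRConcavePMF N r f)
    (hmean : ∑ i ∈ Finset.range (N+1), ((i:ℝ)/N) * f i ≤ θ) :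
    (∑ i ∈ Finset.range (N+1), if τ ≤ (i:ℝ)/N then f i else 0) ≤ Dmax θ τ N r := by
  apply le_csSup
  · refine ⟨1, ?_⟩
    rintro p ⟨g, hg, _, rfl⟩
    calc (∑ i ∈ Finset.range (N+1), if τ ≤ (i:ℝ)/N then g i else 0)
        ≤ ∑ i ∈ Finset.range (N+1), g i := by
          refine Finset.sum_le_sum (fun i _ => ?_)
          split
          · exact le_refl _
          · exact hg.1 i
      _ = 1 := hg.2.2.1
  · exact ⟨f, hf, hmean, rfl⟩

end Helpers

/-- Theorem 4 (error control for complementary pairs stability selection).  For each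
low-rate feature `k ∈ L`, let `r̂ k` be its selection rate over `2B` subsamples and
`s k` its simultaneous selection rate over the `B` complementary pairs.  If each `r̂ k`
has a `−1/4`-concave law on the grid `{0, 1/(2B), …, 1}` with mean at most `θ`, and
each `s k` has a `−1/2`-concave law on `{0, 1/B, …, 1}` with mean at most `θ²`, then
the expected number of features `k ∈ L` with `r̂ k ≥ τ` is at most
`D(θ, τ, 2B, −1/4)·|L|`; if moreover `θ² < 2τ − 1`, it is also at most
`D(θ², 2τ−1, B, −1/2)·|L|`, hence at most the minimum of the two bounds. -/
theorem stability_selection_error_control {Ω ι : Type*} [MeasurableSpace Ω]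
    (μ : Measure Ω) [IsProbabilityMeasure μ] (B : ℕ) (hB : 0 < B)
    (L : Finset ι) (E : ι → ℕ → Set Ω) (hE : ∀ k b, MeasurableSet (E k b))
    (r s : ι → Ω → ℝ)
    (hr : r = fun k ω =>
      (∑ b ∈ Finset.Icc 1 (2 * B), (E k b).indicator (fun _ => (1 : ℝ)) ω) / (2 * B))
    (hs : s = fun k ω =>
      (∑ b ∈ Finset.Icc 1 B,
        (E k (2 * b - 1) ∩ E k (2 * b)).indicator (fun _ => (1 : ℝ)) ω) / B)
    (θ τ : ℝ) (hθ0 : 0 ≤ θ) (hθτ : θ < τ) (hτ1 : τ ≤ 1)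
    (hlawr : ∀ k ∈ L, ∃ f : ℕ → ℝ,
      (∀ i ≤ 2 * B, f i = (μ {ω | r k ω = (i : ℝ) / (2 * B)}).toReal) ∧
      IsRConcavePMF (2 * B) (-(1 / 4)) f ∧
      (∑ i ∈ Finset.range (2 * B + 1), ((i : ℝ) / (2 * B)) * f i) ≤ θ)
    (hlaws : ∀ k ∈ L, ∃ g : ℕ → ℝ,
      (∀ i ≤ B, g i = (μ {ω | s k ω = (i : ℝ) / B}).toReal) ∧
      IsRConcavePMF B (-(1 / 2)) g ∧
      (∑ i ∈ Finset.range (B + 1), ((i : ℝ) / B) * g i) ≤ θ ^ 2) :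
    (∫ ω, (∑ k ∈ L, if τ ≤ r k ω then (1 : ℝ) else 0) ∂μ ≤
      Dmax θ τ (2 * B) (-(1 / 4)) * L.card) ∧
    (θ ^ 2 < 2 * τ - 1 →
      (∫ ω, (∑ k ∈ L, if τ ≤ r k ω then (1 : ℝ) else 0) ∂μ ≤
        Dmax (θ ^ 2) (2 * τ - 1) B (-(1 / 2)) * L.card) ∧
      (∫ ω, (∑ k ∈ L, if τ ≤ r k ω then (1 : ℝ) else 0) ∂μ ≤
        min (Dmax (θ ^ 2) (2 * τ - 1) B (-(1 / 2)))
          (Dmax θ τ (2 * B) (-(1 / 4))) * L.card)) := by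
  classical
  have hB2 : (0:ℝ) < 2 * (B:ℝ) := by positivity
  have hB1 : (0:ℝ) < (B:ℝ) := by exact_mod_cast hB
  -- measurability
  have hrmeas : ∀ k, Measurable (r k) := by
    intro k
    rw [hr]
    exact (Finset.measurable_sum _
      (fun b _ => measurable_const.indicator (hE k b))).div_const _
  have hsmeas : ∀ k, Measurable (s k) := by
    intro k
    rw [hs]
    exact (Finset.measurable_sum _
      (fun b _ => measurable_const.indicator ((hE k (2*b-1)).inter (hE k (2*b))))).div_const _
  -- values on the grid
  have hsum_card : ∀ (n : ℕ) (A : ℕ → Set Ω) (ω : Ω),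
      ∑ b ∈ Finset.Icc 1 n, (A b).indicator (fun _ => (1:ℝ)) ω
        = (((Finset.Icc 1 n).filter (fun b => ω ∈ A b)).card : ℝ) := by
    intro n A ω
    simp [Set.indicator_apply, Finset.sum_boole]
  have hrval : ∀ k ω, ∃ m ≤ 2*B, r k ω = (m:ℝ) / (2*(B:ℝ)) := by
    intro k ω
    refine ⟨((Finset.Icc 1 (2*B)).filter (fun b => ω ∈ E k b)).card, ?_, ?_⟩
    · calc ((Finset.Icc 1 (2*B)).filter (fun b => ω ∈ E k b)).card
          ≤ (Finset.Icc 1 (2*B)).card := Finset.card_filter_le _ _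
        _ = 2*B := by rw [Nat.card_Icc]; omega
    · simp only [hr]
      rw [hsum_card]
  have hsval : ∀ k ω, ∃ m ≤ B, s k ω = (m:ℝ) / (B:ℝ) := by
    intro k ω
    refine ⟨((Finset.Icc 1 B).filter
        (fun b => ω ∈ E k (2*b-1) ∩ E k (2*b))).card, ?_, ?_⟩
    · calc ((Finset.Icc 1 B).filter (fun b => ω ∈ E k (2*b-1) ∩ E k (2*b))).card
          ≤ (Finset.Icc 1 B).card := Finset.card_filter_le _ _
        _ = B := by rw [Nat.card_Icc]; omega
    · simp only [hs]
      rw [hsum_card]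
      try simp [Finset.filter_congr_decidable]
  -- inclusion of events
  have hsub : ∀ k, {ω | τ ≤ r k ω} ⊆ {ω | 2*τ - 1 ≤ s k ω} := by
    intro k ω hω
    simp only [Set.mem_setOf_eq] at hω ⊢
    have hpair := pairSum (fun b => (E k b).indicator (fun _ => (1:ℝ)) ω) B
    have hSp : (∑ b ∈ Finset.Icc 1 (2*B), (E k b).indicator (fun _ => (1:ℝ)) ω) - B
        ≤ ∑ b ∈ Finset.Icc 1 B, (E k (2*b-1) ∩ E k (2*b)).indicator (fun _ => (1:ℝ)) ω := by
      rw [hpair]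
      calc (∑ b ∈ Finset.Icc 1 B,
              ((E k (2*b-1)).indicator (fun _ => (1:ℝ)) ω + (E k (2*b)).indicator (fun _ => (1:ℝ)) ω)) - B
          = ∑ b ∈ Finset.Icc 1 B,
              ((E k (2*b-1)).indicator (fun _ => (1:ℝ)) ω + (E k (2*b)).indicator (fun _ => (1:ℝ)) ω - 1) := by
            rw [Finset.sum_sub_distrib]; simp [Nat.card_Icc]
        _ ≤ _ := Finset.sum_le_sum (fun b _ => indInter _ _ ω)
    simp only [hr] at hω
    simp only [hs]
    rw [le_div_iff₀ hB2] at hω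
    rw [le_div_iff₀ hB1]
    nlinarith [hSp]
  -- per-feature probability bounds
  have hbound1 : ∀ k ∈ L, (μ {ω | τ ≤ r k ω}).toReal ≤ Dmax θ τ (2*B) (-(1/4)) := by
    intro k hk
    obtain ⟨f, hfval, hfpmf, hfmean⟩ := hlawr k hk
    have hcast : ((2*B : ℕ) : ℝ) = 2*(B:ℝ) := by push_cast; ring
    have hgp := grid_prob μ (r k) (hrmeas k) (2*B) (2*(B:ℝ)) hB2 (hrval k) τ
    have heq : (μ {ω | τ ≤ r k ω}).toReal
        = ∑ i ∈ Finset.range (2*B+1), if τ ≤ (i:ℝ)/(2*(B:ℝ)) then f i else 0 := by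
      rw [hgp]
      refine Finset.sum_congr rfl (fun i hi => ?_)
      rw [hfval i (by simpa [Nat.lt_succ_iff] using Finset.mem_range.mp hi)]
    rw [heq]
    have hD := le_Dmax (θ := θ) (τ := τ) hfpmf (by rw [hcast]; exact hfmean)
    rw [hcast] at hD
    exact hD
  have hbound2 : ∀ k ∈ L, (μ {ω | τ ≤ r k ω}).toReal
      ≤ Dmax (θ^2) (2*τ - 1) B (-(1/2)) := by
    intro k hk
    obtain ⟨g, hgval, hgpmf, hgmean⟩ := hlaws k hk
    have hmono : (μ {ω | τ ≤ r k ω}).toReal ≤ (μ {ω | 2*τ - 1 ≤ s k ω}).toReal :=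
      ENNReal.toReal_mono (measure_ne_top μ _) (measure_mono (hsub k))
    refine hmono.trans ?_
    have hgp := grid_prob μ (s k) (hsmeas k) B (B:ℝ) hB1 (hsval k) (2*τ - 1)
    have heq : (μ {ω | 2*τ - 1 ≤ s k ω}).toReal
        = ∑ i ∈ Finset.range (B+1), if 2*τ - 1 ≤ (i:ℝ)/(B:ℝ) then g i else 0 := by
      rw [hgp]
      refine Finset.sum_congr rfl (fun i hi => ?_)
      rw [hgval i (by simpa [Nat.lt_succ_iff] using Finset.mem_range.mp hi)]
    rw [heq]
    exact le_Dmax (θ := θ^2) (τ := 2*τ - 1) hgpmf hgmean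
  -- the integral equals the sum of probabilities
  have hmeasset : ∀ k, MeasurableSet {ω | τ ≤ r k ω} :=
    fun k => (hrmeas k) measurableSet_Ici
  have hfun : ∀ k, (fun ω => if τ ≤ r k ω then (1:ℝ) else 0)
      = Set.indicator {ω | τ ≤ r k ω} (fun _ => (1:ℝ)) := by
    intro k
    ext ω
    simp [Set.indicator_apply, Set.mem_setOf_eq]
  have hint : ∫ ω, (∑ k ∈ L, if τ ≤ r k ω then (1 : ℝ) else 0) ∂μ
      = ∑ k ∈ L, (μ {ω | τ ≤ r k ω}).toReal := by
    rw [integral_finset_sum L (fun k _ => by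
      rw [hfun k]
      exact (integrable_const (1:ℝ)).indicator (hmeasset k))]
    refine Finset.sum_congr rfl (fun k _ => ?_)
    rw [hfun k]
    have h1 : ∫ ω, {ω | τ ≤ r k ω}.indicator (fun _ => (1:ℝ)) ω ∂μ = μ.real {ω | τ ≤ r k ω} := by
      simpa using integral_indicator_const (1:ℝ) (hmeasset k)
    exact h1
  have hsum_le : ∀ D : ℝ, (∀ k ∈ L, (μ {ω | τ ≤ r k ω}).toReal ≤ D) →
      ∫ ω, (∑ k ∈ L, if τ ≤ r k ω then (1 : ℝ) else 0) ∂μ ≤ D * L.card := by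
    intro D hD
    rw [hint]
    calc ∑ k ∈ L, (μ {ω | τ ≤ r k ω}).toReal ≤ ∑ _k ∈ L, D := Finset.sum_le_sum hD
      _ = D * L.card := by rw [Finset.sum_const, nsmul_eq_mul, mul_comm]
  refine ⟨hsum_le _ hbound1, fun _ => ⟨hsum_le _ hbound2, ?_⟩⟩
  rw [min_mul_of_nonneg _ _ (by positivity : (0:ℝ) ≤ (L.card:ℝ))]
  exact le_min (hsum_le _ hbound2) (hsum_le _ hbound1)
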